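/- The map sending a natural number N to its α-admissible digit sequence (its Ostrowski expansion with respect to α) is a bijection between the nonnegative integers and the set of finitely-supported α-admissible digit sequences (including the empty/zero sequence representing 0). -/

import Mathlib

namespace BaseAlpha

/-- admissibility predicate -/
def Adm (a : ℕ → ℕ) (c : ℕ → ℕ) : Prop :=
  c 0 = 0 ∧ (Function.support c).Finite ∧
  c 1 ≤ a 1 - 1 ∧ (∀ k, 1 ≤ k → c k ≤ a k) ∧
  (∀ k, 2 ≤ k → c k = a k → c (k - 1) = 0)

section
variable {a q : ℕ → ℕ}

lemma q_pos (ha : ∀ k, 1 ≤ k → 1 ≤ a k) (hq1 : q 1 = 1)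
    (hqrec : ∀ k, q (k + 2) = a (k + 1) * q (k + 1) + q k) :
    ∀ k, 1 ≤ q (k + 1) := by
  intro k
  induction k with
  | zero => simp [hq1]
  | succ k ih =>
    have h1 := hqrec k
    have h2 : 1 * 1 ≤ a (k + 1) * q (k + 1) :=
      Nat.mul_le_mul (ha (k + 1) (by omega)) ih
    linarith

lemma q_le (ha : ∀ k, 1 ≤ k → 1 ≤ a k) (hq0 : q 0 = 0) (hq1 : q 1 = 1)
    (hqrec : ∀ k, q (k + 2) = a (k + 1) * q (k + 1) + q k) :
    ∀ m n, m ≤ n → q m ≤ q n := by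
  have step : ∀ k, q k ≤ q (k + 1) := by
    intro k
    match k with
    | 0 => simp [hq0]
    | 1 => rw [hq1]; exact q_pos ha hq1 hqrec 1
    | (m + 2) =>
      have h1 := hqrec (m + 1)
      have h2 : 1 * q (m + 2) ≤ a (m + 2) * q (m + 2) :=
        Nat.mul_le_mul_right _ (ha (m + 2) (by omega))
      linarith
  intro m n hmn
  induction n with
  | zero => simp_all
  | succ n ih =>
    rcases Nat.lt_or_ge m (n + 1) with h | h
    · exact le_trans (ih (by omega)) (step n)
    · have : m = n + 1 := by omega
      simp [this]

lemma q_growth (ha : ∀ k, 1 ≤ k → 1 ≤ a k) (hq1 : q 1 = 1)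
    (hqrec : ∀ k, q (k + 2) = a (k + 1) * q (k + 1) + q k) :
    ∀ k, k ≤ q (k + 1) := by
  intro k
  induction k using Nat.strong_induction_on with
  | _ k ih =>
    match k with
    | 0 => omega
    | 1 => exact q_pos ha hq1 hqrec 1
    | (m + 2) =>
      have h1 := hqrec (m + 1)
      have h2 : 1 * q (m + 2) ≤ a (m + 2) * q (m + 2) :=
        Nat.mul_le_mul_right _ (ha (m + 2) (by omega))
      have h3 : m + 1 ≤ q (m + 2) := ih (m + 1) (by omega)
      have h4 : 1 ≤ q (m + 1) := q_pos ha hq1 hqrec m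
      linarith

/-- the key bound: admissible digits below index `n+1` sum to less than `q (n+1)` -/
lemma sum_lt (ha : ∀ k, 1 ≤ k → 1 ≤ a k) (hq0 : q 0 = 0) (hq1 : q 1 = 1)
    (hqrec : ∀ k, q (k + 2) = a (k + 1) * q (k + 1) + q k)
    (c : ℕ → ℕ) (h1 : c 1 ≤ a 1 - 1) (h2 : ∀ k, 1 ≤ k → c k ≤ a k)
    (h3 : ∀ k, 2 ≤ k → c k = a k → c (k - 1) = 0) :
    ∀ n, ∑ k ∈ Finset.range (n + 1), c k * q k < q (n + 1) := by
  intro n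
  induction n using Nat.strong_induction_on with
  | _ n ih =>
    match n with
    | 0 => simp [hq0, hq1]
    | 1 =>
      have hq2 : q 2 = a 1 := by have := hqrec 0; simp [hq0, hq1] at this; omega
      have ha1 := ha 1 le_rfl
      rw [Finset.sum_range_succ, Finset.sum_range_succ, Finset.sum_range_zero, hq0, hq1]
      simp only [Nat.mul_zero, Nat.mul_one, Nat.zero_add]
      show c 1 < q 2
      omega
    | (m + 2) =>
      have hrec := hqrec (m + 1)
      rw [Finset.sum_range_succ]
      rcases eq_or_lt_of_le (h2 (m + 2) (by omega)) with heq | hlt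
      · -- c (m+2) = a (m+2), so c (m+1) = 0
        have hz : c (m + 1) = 0 := h3 (m + 2) (by omega) heq
        have hs : ∑ k ∈ Finset.range (m + 1), c k * q k < q (m + 1) := ih m (by omega)
        rw [Finset.sum_range_succ, hz]
        rw [heq]
        linarith
      · have hs : ∑ k ∈ Finset.range (m + 2), c k * q k < q (m + 2) := ih (m + 1) (by omega)
        have h4 : (c (m + 2) + 1) * q (m + 2) ≤ a (m + 2) * q (m + 2) :=
          Nat.mul_le_mul_right _ (by omega)
        have h5 : (c (m + 2) + 1) * q (m + 2) = c (m + 2) * q (m + 2) + q (m + 2) := by ring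
        linarith

lemma val_eq_sum (c : ℕ → ℕ) (m : ℕ) (h : ∀ k, m ≤ k → c k = 0) :
    ∑ᶠ k, c k * q k = ∑ k ∈ Finset.range m, c k * q k := by
  apply finsum_eq_sum_of_support_subset
  intro k hk
  simp only [Function.mem_support] at hk
  simp only [Finset.coe_range, Set.mem_Iio]
  by_contra hc
  push_neg at hc
  rw [h k hc, zero_mul] at hk
  exact hk rfl

lemma support_bound {c : ℕ → ℕ} (hfin : (Function.support c).Finite) :
    ∃ m, ∀ k, m ≤ k → c k = 0 := by
  obtain ⟨b, hb⟩ := hfin.bddAbove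
  refine ⟨b + 1, fun k hk => ?_⟩
  by_contra hc
  have : k ≤ b := hb (Function.mem_support.mpr hc)
  omega

lemma term_le_val (c : ℕ → ℕ) (hfin : (Function.support c).Finite) (k : ℕ) :
    c k * q k ≤ ∑ᶠ j, c j * q j := by
  obtain ⟨m, hm⟩ := support_bound hfin
  rw [val_eq_sum c (max m (k + 1)) (fun j hj => hm j (le_trans (le_max_left _ _) hj))]
  exact Finset.single_le_sum (f := fun j => c j * q j) (fun i _ => Nat.zero_le _)
    (Finset.mem_range.mpr (lt_of_lt_of_le (Nat.lt_succ_self k) (le_max_right m (k + 1))))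

/-- the top index for a positive N -/
lemma top_index (ha : ∀ k, 1 ≤ k → 1 ≤ a k) (hq0 : q 0 = 0) (hq1 : q 1 = 1)
    (hqrec : ∀ k, q (k + 2) = a (k + 1) * q (k + 1) + q k)
    (N : ℕ) (hN : 0 < N) :
    ∃ n, 1 ≤ n ∧ q n ≤ N ∧ N < q (n + 1) ∧
      ∀ k, n + 1 ≤ k → N < q k := by
  set n := Nat.findGreatest (fun m => q m ≤ N) (N + 1) with hn
  have hmem : q 1 ≤ N := by omega
  have hn1 : 1 ≤ n :=
    Nat.le_findGreatest (P := fun m => q m ≤ N) (by omega) hmem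
  have hspec : q n ≤ N :=
    Nat.findGreatest_spec (P := fun m => q m ≤ N) (m := 1) (by omega) hmem
  have hgt : N < q (n + 1) := by
    rcases Nat.lt_or_ge (N + 1) (n + 1) with h | h
    · have h1 : N + 2 ≤ n + 1 := by omega
      have h2 : N + 1 ≤ q (N + 2) := q_growth ha hq1 hqrec (N + 1)
      have h3 : q (N + 2) ≤ q (n + 1) := q_le ha hq0 hq1 hqrec _ _ h1
      omega
    · have := Nat.findGreatest_is_greatest (P := fun m => q m ≤ N)
        (show n < n + 1 by omega) h
      omega
  refine ⟨n, hn1, hspec, hgt, fun k hk => lt_of_lt_of_le hgt (q_le ha hq0 hq1 hqrec _ _ hk)⟩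

/-- existence of an admissible representation, with the support bound -/
lemma exists_rep (ha : ∀ k, 1 ≤ k → 1 ≤ a k) (hq0 : q 0 = 0) (hq1 : q 1 = 1)
    (hqrec : ∀ k, q (k + 2) = a (k + 1) * q (k + 1) + q k) :
    ∀ N, ∃ c, Adm a c ∧ (∀ k, 1 ≤ k → N < q k → c k = 0) ∧ ∑ᶠ k, c k * q k = N := by
  intro N
  induction N using Nat.strong_induction_on with
  | _ N ih =>
    rcases Nat.eq_zero_or_pos N with rfl | hN
    · refine ⟨fun _ => 0, ⟨rfl, by simp, Nat.zero_le _, fun k _ => Nat.zero_le _,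
        fun k hk hak => rfl⟩, fun _ _ _ => rfl, by simp⟩
    obtain ⟨n, hn1, hqn, hgt, hhigh⟩ := top_index ha hq0 hq1 hqrec N hN
    have hqnpos : 1 ≤ q n := by
      obtain ⟨m, rfl⟩ : ∃ m, n = m + 1 := ⟨n - 1, by omega⟩
      exact q_pos ha hq1 hqrec m
    set d := N / q n with hd
    set r := N % q n with hr
    have hdm : q n * d + r = N := Nat.div_add_mod N (q n)
    have hrlt : r < q n := Nat.mod_lt _ hqnpos
    have hd1 : 1 ≤ d := by
      rw [hd, Nat.le_div_iff_mul_le hqnpos]; omega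
    have hqn1 : q (n - 1) ≤ q n := q_le ha hq0 hq1 hqrec _ _ (by omega)
    have hrecn : q (n + 1) = a n * q n + q (n - 1) := by
      obtain ⟨m, rfl⟩ : ∃ m, n = m + 1 := ⟨n - 1, by omega⟩
      simpa using hqrec m
    have hda : d ≤ a n := by
      have : N < (a n + 1) * q n := by
        have : (a n + 1) * q n = a n * q n + q n := by ring
        omega
      have := (Nat.div_lt_iff_lt_mul hqnpos).mpr this
      omega
    have hd1a : n = 1 → d ≤ a 1 - 1 := by
      intro h1
      have ha1 := ha 1 le_rfl
      have hq2 : q 2 = a 1 := by have := hqrec 0; simp [hq0, hq1] at this; omega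
      have hgt2 : N < a 1 := by
        rw [h1, show (1:ℕ) + 1 = 2 from rfl, hq2] at hgt; exact hgt
      have hdN : d ≤ N := Nat.div_le_self _ _
      omega
    -- representation of the remainder
    obtain ⟨c', ⟨hc0, hcfin, hc1, hcb, hcc⟩, hcsupp, hcval⟩ := ih r (by omega)
    have hchigh : ∀ k, n ≤ k → c' k = 0 := by
      intro k hk
      exact hcsupp k (by omega) (lt_of_lt_of_le hrlt (q_le ha hq0 hq1 hqrec _ _ hk))
    refine ⟨fun k => if k = n then d else c' k, ⟨?_, ?_, ?_, ?_, ?_⟩, ?_, ?_⟩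
    · simp only [if_neg (show (0:ℕ) ≠ n by omega)]; exact hc0
    · apply Set.Finite.subset (hcfin.insert n)
      intro k hk
      simp only [Function.mem_support] at hk
      by_cases hkn : k = n
      · simp [hkn]
      · simp only [if_neg hkn] at hk
        exact Set.mem_insert_of_mem _ hk
    · by_cases h1 : (1 : ℕ) = n
      · simp only [if_pos h1]; exact hd1a h1.symm
      · simp only [if_neg h1]; exact hc1
    · intro k hk
      by_cases hkn : k = n
      · simp only [if_pos hkn]; subst hkn; exact hda
      · simp only [if_neg hkn]; exact hcb k hk
    · intro k hk hak
      by_cases hkn : k = n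
      · subst hkn
        simp only [if_pos rfl, if_true] at hak
        have he : q k * d = a k * q k := by rw [hak]; ring
        have hrn : r < q (k - 1) := by linarith
        have : c' (k - 1) = 0 := hcsupp (k - 1) (by omega) hrn
        simp only [if_neg (show k - 1 ≠ k by omega)]
        exact this
      · simp only [if_neg hkn] at hak
        have hklt : k < n := by
          by_contra hc
          have := hchigh k (by omega)
          have := ha k (by omega)
          omega
        simp only [if_neg (show k - 1 ≠ n by omega)]
        exact hcc k hk hak
    · intro k hk hNq
      have hkn : k ≠ n := by rintro rfl; omega
      simp only [if_neg hkn]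
      exact hcsupp k hk (by omega)
    · have hz : ∀ k, n + 1 ≤ k → (if k = n then d else c' k) = 0 := by
        intro k hk
        rw [if_neg (by omega)]
        exact hchigh k (by omega)
      rw [val_eq_sum _ (n + 1) hz, Finset.sum_range_succ, if_pos rfl]
      have hsum : ∑ k ∈ Finset.range n, (if k = n then d else c' k) * q k
          = ∑ k ∈ Finset.range n, c' k * q k := by
        apply Finset.sum_congr rfl
        intro k hk
        rw [if_neg (by simp at hk; omega)]
      rw [hsum, ← val_eq_sum c' n hchigh, hcval]
      have := mul_comm (q n) d
      omega

/-- uniqueness of the admissible representation -/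
lemma rep_unique (ha : ∀ k, 1 ≤ k → 1 ≤ a k) (hq0 : q 0 = 0) (hq1 : q 1 = 1)
    (hqrec : ∀ k, q (k + 2) = a (k + 1) * q (k + 1) + q k) :
    ∀ N (c c' : ℕ → ℕ), Adm a c → Adm a c' →
      ∑ᶠ k, c k * q k = N → ∑ᶠ k, c' k * q k = N → c = c' := by
  intro N
  induction N using Nat.strong_induction_on with
  | _ N ih =>
    intro c c' hc hc' hval hval'
    obtain ⟨hc0, hcfin, hc1, hcb, hcc⟩ := hc
    obtain ⟨hc0', hcfin', hc1', hcb', hcc'⟩ := hc'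
    have hzero : ∀ (e : ℕ → ℕ), e 0 = 0 → (Function.support e).Finite →
        (∑ᶠ k, e k * q k) = N → ∀ k, 1 ≤ k → e k ≠ 0 → q k ≤ N := by
      intro e he0 hefin heval k hk hek
      have h1 := term_le_val (q := q) e hefin k
      have h2 : q k ≤ e k * q k := Nat.le_mul_of_pos_left _ (by omega)
      omega
    rcases Nat.eq_zero_or_pos N with rfl | hN
    · funext k
      have hk : ∀ (e : ℕ → ℕ), e 0 = 0 → (Function.support e).Finite →
          (∑ᶠ k, e k * q k) = 0 → e k = 0 := by
        intro e he0 hefin heval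
        rcases Nat.eq_zero_or_pos k with rfl | hkpos
        · exact he0
        by_contra hek
        have hqk : 1 ≤ q k := by
          obtain ⟨m, rfl⟩ : ∃ m, k = m + 1 := ⟨k - 1, by omega⟩
          exact q_pos ha hq1 hqrec m
        have := hzero e he0 hefin heval k hkpos hek
        omega
      rw [hk c hc0 hcfin hval, hk c' hc0' hcfin' hval']
    obtain ⟨n, hn1, hqn, hgt, hhigh⟩ := top_index ha hq0 hq1 hqrec N hN
    have hqnpos : 1 ≤ q n := by
      obtain ⟨m, rfl⟩ : ∃ m, n = m + 1 := ⟨n - 1, by omega⟩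
      exact q_pos ha hq1 hqrec m
    -- both digits vanish above n
    have hch : ∀ (e : ℕ → ℕ), e 0 = 0 → (Function.support e).Finite →
        (∑ᶠ k, e k * q k) = N → ∀ k, n + 1 ≤ k → e k = 0 := by
      intro e he0 hefin heval k hk
      by_contra hek
      have := hzero e he0 hefin heval k (by omega) hek
      have := hhigh k hk
      omega
    have hchc := hch c hc0 hcfin hval
    have hchc' := hch c' hc0' hcfin' hval'
    -- decompose the sums
    have hdec : ∀ (e : ℕ → ℕ), (∀ k, n + 1 ≤ k → e k = 0) →
        (∑ᶠ k, e k * q k) = (∑ k ∈ Finset.range n, e k * q k) + e n * q n := by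
      intro e he
      rw [val_eq_sum e (n + 1) he, Finset.sum_range_succ]
    have hslt : ∀ (e : ℕ → ℕ), e 1 ≤ a 1 - 1 → (∀ k, 1 ≤ k → e k ≤ a k) →
        (∀ k, 2 ≤ k → e k = a k → e (k - 1) = 0) →
        (∑ k ∈ Finset.range n, e k * q k) < q n := by
      intro e h1 h2 h3
      obtain ⟨m, rfl⟩ : ∃ m, n = m + 1 := ⟨n - 1, by omega⟩
      exact sum_lt ha hq0 hq1 hqrec e h1 h2 h3 m
    have hsc := hslt c hc1 hcb hcc
    have hsc' := hslt c' hc1' hcb' hcc'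
    have heqc : (∑ k ∈ Finset.range n, c k * q k) + c n * q n = N := by
      rw [← hdec c hchc]; exact hval
    have heqc' : (∑ k ∈ Finset.range n, c' k * q k) + c' n * q n = N := by
      rw [← hdec c' hchc']; exact hval'
    -- the top digit is determined
    have hdig : ∀ (s t : ℕ), s + t * q n = N → s < q n → t = N / q n ∧ s = N % q n := by
      intro s t hst hslt2
      constructor
      · rw [← hst, Nat.add_mul_div_right _ _ hqnpos, Nat.div_eq_of_lt hslt2]; omega
      · rw [← hst, Nat.add_mul_mod_self_right, Nat.mod_eq_of_lt hslt2]
    obtain ⟨hcn, hcs⟩ := hdig _ _ heqc hsc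
    obtain ⟨hcn', hcs'⟩ := hdig _ _ heqc' hsc'
    -- the top digit is positive, so the remainder is smaller
    have hcnpos : 1 ≤ c n := by
      by_contra h
      have : c n = 0 := by omega
      rw [this] at heqc
      omega
    have hr : N % q n < N := by
      have h2 : q n ≤ c n * q n := Nat.le_mul_of_pos_left _ (by omega)
      omega
    -- truncate and apply induction
    set d := fun k => if k = n then 0 else c k with hdf
    set d' := fun k => if k = n then 0 else c' k with hdf'
    have htrunc : ∀ (e : ℕ → ℕ), e 0 = 0 → (Function.support e).Finite →
        e 1 ≤ a 1 - 1 → (∀ k, 1 ≤ k → e k ≤ a k) →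
        (∀ k, 2 ≤ k → e k = a k → e (k - 1) = 0) →
        (∀ k, n + 1 ≤ k → e k = 0) →
        (∑ k ∈ Finset.range n, e k * q k) = N % q n →
        Adm a (fun k => if k = n then 0 else e k) ∧
        (∑ᶠ k, (if k = n then 0 else e k) * q k) = N % q n := by
      intro e h0 hfin h1 h2 h3 hh hsum
      constructor
      · refine ⟨by simp only [if_neg (show (0:ℕ) ≠ n by omega)]; exact h0, ?_, ?_, ?_, ?_⟩
        · apply Set.Finite.subset hfin
          intro k hk
          simp only [Function.mem_support] at hk ⊢
          by_cases hkn : k = n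
          · simp [hkn] at hk
          · simpa [if_neg hkn] using hk
        · by_cases h1n : (1:ℕ) = n
          · simp [if_pos h1n]
          · simpa [if_neg h1n] using h1
        · intro k hk
          by_cases hkn : k = n
          · simp [if_pos hkn]
          · simpa [if_neg hkn] using h2 k hk
        · intro k hk hak
          by_cases hkn : k = n
          · simp only [if_pos hkn] at hak
            have := ha k (by omega)
            omega
          · simp only [if_neg hkn] at hak
            by_cases hk1n : k - 1 = n
            · simp [if_pos hk1n]
            · simp only [if_neg hk1n]
              exact h3 k hk hak
      · have hz : ∀ k, n ≤ k → (if k = n then 0 else e k) = 0 := by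
          intro k hk
          by_cases hkn : k = n
          · simp [hkn]
          · rw [if_neg hkn]; exact hh k (by omega)
        rw [val_eq_sum _ n hz, ← hsum]
        apply Finset.sum_congr rfl
        intro k hk
        rw [if_neg (by simp at hk; omega)]
    obtain ⟨hdadm, hdval⟩ := htrunc c hc0 hcfin hc1 hcb hcc hchc hcs
    obtain ⟨hdadm', hdval'⟩ := htrunc c' hc0' hcfin' hc1' hcb' hcc' hchc' hcs'
    have hdd : d = d' := ih (N % q n) hr d d' hdadm hdadm' hdval hdval'
    funext k
    by_cases hkn : k = n
    · subst hkn; omega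
    · have h1 : d k = c k := by simp [hdf, if_neg hkn]
      have h2 : d' k = c' k := by simp [hdf', if_neg hkn]
      rw [← h1, ← h2, hdd]

end

end BaseAlpha

/-- The value map is a bijection between the finitely supported α-admissible
digit sequences and the nonnegative integers.  (`q k` is the paper's
`q_{k-1}`; digits are indexed from 1, with `c 0 = 0`.) -/
theorem base_alpha_bijection (a q : ℕ → ℕ)
    (ha : ∀ k, 1 ≤ k → 1 ≤ a k)
    (hq0 : q 0 = 0) (hq1 : q 1 = 1)
    (hqrec : ∀ k, q (k + 2) = a (k + 1) * q (k + 1) + q k) :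
    Function.Bijective
      (fun c : {c : ℕ → ℕ //
          c 0 = 0 ∧ (Function.support c).Finite ∧
          c 1 ≤ a 1 - 1 ∧ (∀ k, 1 ≤ k → c k ≤ a k) ∧
          (∀ k, 2 ≤ k → c k = a k → c (k - 1) = 0)} =>
        ∑ᶠ k, c.1 k * q k) := by
  rw [Function.bijective_iff_existsUnique]
  intro N
  obtain ⟨c, hadm, _, hval⟩ := BaseAlpha.exists_rep ha hq0 hq1 hqrec N
  refine ⟨⟨c, hadm⟩, hval, ?_⟩
  intro y hy
  exact Subtype.ext (BaseAlpha.rep_unique ha hq0 hq1 hqrec N y.1 c y.2 hadm hy hval)
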